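/- For a Tychonoff space X: if C_p(X) satisfies U_fin(Γ_0, Γ_0) (for every sequence of sets converging pointwise to 0 one can choose finite subsets F_n such that for every finite K ⊆ X and ε > 0 there is n' with: for all n > n' and each x ∈ K, some g ∈ F_n has |g(x)| < ε), then X satisfies U_fin(Γ_F, Γ): for every sequence of γ_F-shrinkable γ-covers U_n there are finite F_n ⊆ U_n with {⋃F_n : n ∈ ω} a γ-cover of X. -/

import Mathlib

open Set Filter Topology

/-- The set of continuous real-valued functions on `X`. The ambient space
`X → ℝ` carries the product topology, i.e. the topology of pointwise
convergence, so closures and neighborhoods below are those of `C_p(X)`. -/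

def Cp (X : Type*) [TopologicalSpace X] : Set (X → ℝ) := {f | Continuous f}

/-- `A` clusters at `y` but omits `y` (the family Ω_y). -/
def OmegaAt {Y : Type*} [TopologicalSpace Y] (y : Y) (A : Set Y) : Prop :=
  y ∈ closure A ∧ y ∉ A

/-- `A` converges to `y` (the family Γ_y): infinite, omits `y`, and almost
contained in each neighborhood of `y`. -/
def GammaAt {Y : Type*} [TopologicalSpace Y] (y : Y) (A : Set Y) : Prop :=
  A.Infinite ∧ y ∉ A ∧ ∀ W ∈ 𝓝 y, (A \ W).Finite

/-- An infinite family of sets such that each point lies in all but finitely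
many members. -/
def GammaFam {X : Type*} (U : Set (Set X)) : Prop :=
  U.Infinite ∧ ∀ x : X, {u ∈ U | x ∉ u}.Finite

/-- `U` is a γ-cover of `X`. -/
def IsGammaCover {X : Type*} [TopologicalSpace X] (U : Set (Set X)) : Prop :=
  (∀ u ∈ U, IsOpen u) ∧ (univ : Set X) ∉ U ∧ GammaFam U

/-- `U` is an ω-cover of `X`: a nontrivial open cover such that every finite
subset of `X` is contained in some member. -/
def IsOmegaCover {X : Type*} [TopologicalSpace X] (U : Set (Set X)) : Prop :=
  (∀ u ∈ U, IsOpen u) ∧ (univ : Set X) ∉ U ∧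
    ∀ F : Set X, F.Finite → ∃ u ∈ U, F ⊆ u

/-- A zero-set: the preimage of `0` under a continuous real function. -/
def IsZeroSet {X : Type*} [TopologicalSpace X] (Z : Set X) : Prop :=
  ∃ f : X → ℝ, Continuous f ∧ Z = f ⁻¹' {0}

/-- A cozero-set: the complement of a zero-set. -/
def IsCozeroSet {X : Type*} [TopologicalSpace X] (U : Set X) : Prop :=
  ∃ f : X → ℝ, Continuous f ∧ U = {x | f x ≠ 0}

lemma mem_nhds_zero_pi {X : Type*} {W : Set (X → ℝ)} (hW : W ∈ 𝓝 (0 : X → ℝ)) :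
    ∃ K : Finset X, ∃ ε : ℝ, 0 < ε ∧ ∀ f : X → ℝ, (∀ x ∈ K, |f x| < ε) → f ∈ W := by
  rw [nhds_pi, Filter.mem_pi] at hW
  obtain ⟨I, hI, t, ht, hsub⟩ := hW
  have hb : ∀ x, ∃ ε : ℝ, 0 < ε ∧ ∀ r : ℝ, |r| < ε → r ∈ t x := by
    intro x
    have h1 := ht x
    rw [Metric.mem_nhds_iff] at h1
    obtain ⟨ε, hε, hball⟩ := h1
    exact ⟨ε, hε, fun r hr => hball (by simpa [Real.dist_eq] using hr)⟩
  choose εf hεf hball using hb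
  refine ⟨hI.toFinset, ?_⟩
  by_cases hne : hI.toFinset.Nonempty
  · obtain ⟨x₀, hx₀, hmin⟩ := hI.toFinset.exists_min_image εf hne
    refine ⟨εf x₀, hεf x₀, fun f hf => hsub ?_⟩
    intro x hx
    have hxK : x ∈ hI.toFinset := hI.mem_toFinset.mpr hx
    exact hball x (f x) (lt_of_lt_of_le (hf x hxK) (hmin x hxK))
  · refine ⟨1, one_pos, fun f _ => hsub ?_⟩
    intro x hx
    exact absurd (hI.mem_toFinset.mpr hx) (by simp [Finset.not_nonempty_iff_eq_empty.mp hne])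

lemma sep_lemma {X : Type*} [TopologicalSpace X] {Z u : Set X} (hz : IsZeroSet Z)
    (hc : IsCozeroSet u) (hsub : Z ⊆ u) :
    ∃ φ : X → ℝ, Continuous φ ∧ (∀ x, 0 ≤ φ x) ∧ (∀ x ∈ Z, φ x = 0) ∧ (∀ x ∉ u, φ x = 1) := by
  obtain ⟨g, hg, rfl⟩ := hz
  obtain ⟨f, hf, rfl⟩ := hc
  have hden : ∀ x, 0 < |g x| + |f x| := by
    intro x
    rcases (abs_nonneg (g x)).lt_or_eq with hlt | heq
    · linarith [abs_nonneg (f x)]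
    · have hg0 : g x = 0 := abs_eq_zero.mp heq.symm
      have hx : x ∈ {x | f x ≠ 0} := hsub (by simp [hg0])
      have : 0 < |f x| := abs_pos.mpr hx
      linarith
  refine ⟨fun x => |g x| / (|g x| + |f x|), ?_, ?_, ?_, ?_⟩
  · exact (continuous_abs.comp hg).div ((continuous_abs.comp hg).add (continuous_abs.comp hf))
      (fun x => (hden x).ne')
  · exact fun x => div_nonneg (abs_nonneg _) (hden x).le
  · intro x hx
    have : g x = 0 := by simpa using hx
    simp [this]
  · intro x hx
    have hf0 : f x = 0 := not_not.mp hx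
    have hgx : g x ≠ 0 := by
      intro h0
      exact hx (hsub (by simp [h0]))
    show |g x| / (|g x| + |f x|) = 1
    rw [hf0, abs_zero, add_zero]
    exact div_self (abs_ne_zero.mpr hgx)

/-- A γ_F-shrinkable γ-cover: a γ-cover by cozero-sets admitting a zero-set
shrinking which is itself a γ-family. -/
def GammaFShrinkable {X : Type*} [TopologicalSpace X] (U : Set (Set X)) : Prop :=
  IsGammaCover U ∧ (∀ u ∈ U, IsCozeroSet u) ∧
    ∃ F : Set X → Set X, (∀ u ∈ U, IsZeroSet (F u) ∧ F u ⊆ u) ∧ GammaFam (F '' U)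

/-- `A` is 1-dense in `C_p(X)`. -/
def OneDense {X : Type*} (A : Set (X → ℝ)) : Prop :=
  ∀ x : X, ∀ W : Set ℝ, IsOpen W → W.Nonempty → ∃ f ∈ A, f x ∈ W

/-- `A` is 1-dense at the function `f`. -/
def OneDenseAt {X : Type*} (f : X → ℝ) (A : Set (X → ℝ)) : Prop :=
  ∀ x : X, ∀ ε : ℝ, 0 < ε → ∃ h ∈ A, |h x - f x| < ε

/-- `A` is `n`-dense in `C_p(X)`. -/
def NDense {X : Type*} (n : ℕ) (A : Set (X → ℝ)) : Prop :=
  ∀ x : Fin n → X, Function.Injective x → ∀ W : Fin n → Set ℝ,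
    (∀ i, IsOpen (W i) ∧ (W i).Nonempty) → ∃ f ∈ A, ∀ i, f (x i) ∈ W i

/-- If `C_p(X)` satisfies U_fin(Γ_0, Γ_0) at the zero function, then `X`
satisfies U_fin(Γ_F, Γ). -/
theorem stmt16 {X : Type*} [TopologicalSpace X] [T35Space X]
    (h : ∀ A : ℕ → Set (X → ℝ), (∀ n, A n ⊆ Cp X ∧ GammaAt (0 : X → ℝ) (A n)) →
      ∃ F : ℕ → Set (X → ℝ), (∀ n, (F n).Finite ∧ F n ⊆ A n) ∧
        ∀ K : Set X, K.Finite → ∀ ε : ℝ, 0 < ε →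
          ∃ n₀ : ℕ, ∀ n > n₀, ∀ x ∈ K, ∃ g ∈ F n, |g x| < ε) :
    ∀ U : ℕ → Set (Set X), (∀ n, GammaFShrinkable (U n)) →
      ∃ F : ℕ → Set (Set X), (∀ n, (F n).Finite ∧ F n ⊆ U n) ∧
        ∀ x : X, {n : ℕ | x ∉ ⋃₀ F n}.Finite := by
  intro U hU
  classical
  choose Fsh hFsh using fun n => (hU n).2.2
  -- a separating function for each n, u
  have hφex : ∀ n u, ∃ φ : X → ℝ, Continuous φ ∧ (∀ x, 0 ≤ φ x) ∧
      (u ∈ U n → (∀ x ∈ Fsh n u, φ x = 0) ∧ (∀ x ∉ u, φ x = 1)) := by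
    intro n u
    by_cases hu : u ∈ U n
    · obtain ⟨φ, h1, h2, h3, h4⟩ := sep_lemma ((hFsh n).1 u hu).1 ((hU n).2.1 u hu)
        ((hFsh n).1 u hu).2
      exact ⟨φ, h1, h2, fun _ => ⟨h3, h4⟩⟩
    · exact ⟨fun _ => 1, continuous_const, fun _ => zero_le_one, fun hu' => absurd hu' hu⟩
  choose φ hφc hφ0 hφU using hφex
  -- refine U n to a subfamily on which Fsh n is injective
  set U' : ℕ → Set (Set X) := fun n => Function.invFunOn (Fsh n) (U n) '' (Fsh n '' U n)
    with hU'def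
  have hU'sub : ∀ n, U' n ⊆ U n := by
    rintro n _ ⟨v, hv, rfl⟩
    exact Function.invFunOn_mem hv
  have hFeq : ∀ n, ∀ u ∈ U' n, ∃ v ∈ Fsh n '' U n, Function.invFunOn (Fsh n) (U n) v = u ∧
      Fsh n u = v := by
    rintro n _ ⟨v, hv, rfl⟩
    obtain ⟨a, ha, hfa⟩ := (Set.mem_image _ _ _).mp hv
    exact ⟨v, hv, rfl, Function.invFunOn_eq ⟨a, ha, hfa⟩⟩
  have hInj : ∀ n, Set.InjOn (Fsh n) (U' n) := by
    intro n a ha b hb hab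
    obtain ⟨v, hv, hva, hfa⟩ := hFeq n a ha
    obtain ⟨w, hw, hwb, hfb⟩ := hFeq n b hb
    rw [← hva, ← hwb]
    rw [hfa, hfb] at hab
    rw [hab]
  have hFim : ∀ n, Fsh n '' U' n = Fsh n '' U n := by
    intro n
    apply Set.Subset.antisymm
    · exact Set.image_mono (hU'sub n)
    · intro v hv
      obtain ⟨a, ha, hfa⟩ := (Set.mem_image _ _ _).mp hv
      exact ⟨Function.invFunOn (Fsh n) (U n) v, ⟨v, hv, rfl⟩, Function.invFunOn_eq ⟨a, ha, hfa⟩⟩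
  have hU'inf : ∀ n, (U' n).Infinite := by
    intro n
    have : (Fsh n '' U' n).Infinite := by rw [hFim n]; exact (hFsh n).2.1
    exact Set.Infinite.of_image _ this
  have hfin : ∀ n x, {u ∈ U' n | x ∉ Fsh n u}.Finite := by
    intro n x
    have h1 : (Fsh n '' {u ∈ U' n | x ∉ Fsh n u}).Finite := by
      apply Set.Finite.subset ((hFsh n).2.2 x)
      rintro _ ⟨u, ⟨hu, hxu⟩, rfl⟩
      exact ⟨⟨u, hU'sub n hu, rfl⟩, hxu⟩
    exact Set.Finite.of_finite_image h1 ((hInj n).mono (Set.sep_subset _ _))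
  haveI : Nonempty X := by
    by_contra hX
    rw [not_nonempty_iff] at hX
    exact hU'inf 0 (Set.toFinite _)
  -- the families of functions
  set A : ℕ → Set (X → ℝ) := fun n => φ n '' U' n with hAdef
  have hne0 : ∀ n, ∀ ψ ∈ A n, ∃ x, ψ x ≠ 0 := by
    rintro n _ ⟨u, hu, rfl⟩
    have huU : u ∈ U n := hU'sub n hu
    have : u ≠ univ := by
      intro hEq
      exact (hU n).1.2.1 (hEq ▸ huU)
    obtain ⟨x, hx⟩ := Set.ne_univ_iff_exists_notMem u |>.mp this
    exact ⟨x, by rw [(hφU n u huU).2 x hx]; norm_num⟩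
  have hA : ∀ n, A n ⊆ Cp X ∧ GammaAt (0 : X → ℝ) (A n) := by
    intro n
    refine ⟨?_, ?_, ?_, ?_⟩
    · rintro _ ⟨u, hu, rfl⟩
      exact hφc n u
    · -- infinite
      intro hfinA
      choose! xpt hxpt using hne0 n
      have hsub : U' n ⊆ ⋃ ψ ∈ A n, {u ∈ U' n | xpt ψ ∉ Fsh n u} := by
        intro u hu
        have hmem : φ n u ∈ A n := ⟨u, hu, rfl⟩
        refine Set.mem_biUnion hmem ⟨hu, ?_⟩
        intro hx
        exact hxpt (φ n u) hmem ((hφU n u (hU'sub n hu)).1 _ hx)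
      have hbig : (⋃ ψ ∈ A n, {u ∈ U' n | xpt ψ ∉ Fsh n u}).Finite :=
        Set.Finite.biUnion hfinA (fun ψ _ => hfin n (xpt ψ))
      exact hU'inf n (hbig.subset hsub)
    · -- 0 ∉ A n
      intro h0
      obtain ⟨x, hx⟩ := hne0 n 0 h0
      exact hx rfl
    · -- convergence
      intro W hW
      obtain ⟨K, ε, hε, hball⟩ := mem_nhds_zero_pi hW
      have hsub : A n \ W ⊆ φ n '' (⋃ x ∈ K, {u ∈ U' n | x ∉ Fsh n u}) := by
        rintro _ ⟨⟨u, hu, rfl⟩, hnW⟩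
        have : ¬ ∀ x ∈ K, |φ n u x| < ε := fun hc => hnW (hball _ hc)
        push_neg at this
        obtain ⟨x, hxK, hxε⟩ := this
        have hxF : x ∉ Fsh n u := by
          intro hxF
          rw [(hφU n u (hU'sub n hu)).1 x hxF] at hxε
          simp at hxε
          linarith
        exact ⟨u, Set.mem_biUnion hxK ⟨hu, hxF⟩, rfl⟩
      exact Set.Finite.subset (Set.Finite.image _
        (Set.Finite.biUnion K.finite_toSet (fun x _ => hfin n x))) hsub
  obtain ⟨G, hG1, hG2⟩ := h A hA
  refine ⟨fun n => Function.invFunOn (φ n) (U' n) '' G n, ?_, ?_⟩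
  · intro n
    constructor
    · exact (hG1 n).1.image _
    · rintro _ ⟨g, hg, rfl⟩
      have hgA : g ∈ φ n '' U' n := (hG1 n).2 hg
      exact hU'sub n (Function.invFunOn_mem hgA)
  · intro x
    obtain ⟨n₀, hn₀⟩ := hG2 {x} (Set.finite_singleton x) 1 one_pos
    apply Set.Finite.subset (Set.finite_le_nat n₀)
    intro n hn
    rw [Set.mem_setOf_eq]
    by_contra hle
    push_neg at hle
    obtain ⟨g, hg, hlt⟩ := hn₀ n hle x rfl
    have hgA : g ∈ φ n '' U' n := (hG1 n).2 hg
    set u := Function.invFunOn (φ n) (U' n) g with hudef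
    have huU' : u ∈ U' n := Function.invFunOn_mem hgA
    obtain ⟨a, ha, hfa⟩ := (Set.mem_image _ _ _).mp hgA
    have hφu : φ n u = g := Function.invFunOn_eq ⟨a, ha, hfa⟩
    have hxu : x ∈ u := by
      by_contra hxu
      have := (hφU n u (hU'sub n huU')).2 x hxu
      rw [hφu] at this
      rw [this] at hlt
      simp at hlt
    exact hn ⟨u, ⟨g, hg, rfl⟩, hxu⟩
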